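/- Let d ≥ 1 and 1 ≤ k < n be integers and set λ := n/(n−k). Then for all s₁, …, s_d ≥ 1, with μ_ℓ(s) := 2(s−1)^ℓ/(s+1)^{ℓ+1} (convention 0^0 = 1), one has Σ_{α=1}^d Σ_{ℓ=0}^∞ μ_ℓ(s_α) · log( μ_ℓ(s_α)/μ_ℓ(λ s_α) ) ≤ d · log( (n − k/2)/(n − k) ). -/

import Mathlib

/-- Eigenvalue sequence (in the Fock basis) of the single-mode thermal Gaussian state with
covariance matrix `s·1₂`: `μ_ℓ(s) = 2(s-1)^ℓ/(s+1)^{ℓ+1}` (with `0^0 = 1`). -/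
noncomputable def thermalEigenvalue (s : ℝ) (ℓ : ℕ) : ℝ :=
  2 * (s - 1) ^ ℓ / (s + 1) ^ (ℓ + 1)

lemma thermal_key (lam s : ℝ) (hlam : 1 < lam) (hs : 1 ≤ s) :
    ∑' ℓ : ℕ, thermalEigenvalue s ℓ *
        Real.log (thermalEigenvalue s ℓ / thermalEigenvalue (lam * s) ℓ)
      ≤ Real.log ((lam + 1) / 2) := by
  have hs1 : (0:ℝ) < s + 1 := by linarith
  have hls : 1 < lam * s := by nlinarith
  have hls1 : (0:ℝ) < lam * s - 1 := by linarith
  have hls2 : (0:ℝ) < lam * s + 1 := by linarith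
  set r : ℝ := (s - 1) / (s + 1) with hr
  have hr0 : 0 ≤ r := div_nonneg (by linarith) hs1.le
  have hr1 : r < 1 := by rw [div_lt_one hs1]; linarith
  set A : ℝ := Real.log ((s - 1) * (lam * s + 1) / ((s + 1) * (lam * s - 1))) with hA
  set B : ℝ := Real.log ((lam * s + 1) / (s + 1)) with hB
  -- termwise identity
  have hterm : ∀ ℓ : ℕ, thermalEigenvalue s ℓ *
      Real.log (thermalEigenvalue s ℓ / thermalEigenvalue (lam * s) ℓ)
      = A * ((ℓ : ℝ) * r ^ ℓ) * (1 - r) + B * ((1 - r) * r ^ ℓ) := by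
    intro ℓ
    have h1r : 1 - r = 2 / (s + 1) := by
      rw [hr]; field_simp; norm_num
    rcases eq_or_lt_of_le hs with h1 | h1
    · -- s = 1
      subst h1
      cases ℓ with
      | zero =>
        simp [thermalEigenvalue, hr, hA, hB]
        norm_num [one_div_div]
      | succ m =>
        simp [thermalEigenvalue, hr, zero_pow]
    · -- s > 1
      have hsm : (0:ℝ) < s - 1 := by linarith
      have hq : thermalEigenvalue s ℓ / thermalEigenvalue (lam * s) ℓ
          = ((s - 1) * (lam * s + 1) / ((s + 1) * (lam * s - 1))) ^ ℓ
            * ((lam * s + 1) / (s + 1)) := by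
        unfold thermalEigenvalue
        rw [div_pow, mul_pow, mul_pow]
        field_simp
        ring
      have hx : (0:ℝ) < (s - 1) * (lam * s + 1) / ((s + 1) * (lam * s - 1)) :=
        div_pos (by positivity) (by positivity)
      rw [hq, Real.log_mul (by positivity) (by positivity), Real.log_pow, ← hA, ← hB]
      have hmu : thermalEigenvalue s ℓ = (1 - r) * r ^ ℓ := by
        unfold thermalEigenvalue
        rw [h1r, hr, div_pow]
        field_simp
        ring
      rw [hmu]; ring
  -- sum the closed form
  have hnr : ‖r‖ < 1 := by rw [Real.norm_eq_abs, abs_of_nonneg hr0]; exact hr1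
  have hsum1 : HasSum (fun ℓ : ℕ => A * ((ℓ : ℝ) * r ^ ℓ) * (1 - r))
      (A * (r / (1 - r) ^ 2) * (1 - r)) :=
    ((hasSum_coe_mul_geometric_of_norm_lt_one hnr).mul_left A).mul_right (1 - r)
  have hsum2 : HasSum (fun ℓ : ℕ => B * ((1 - r) * r ^ ℓ))
      (B * ((1 - r) * (1 - r)⁻¹)) :=
    ((hasSum_geometric_of_lt_one hr0 hr1).mul_left (1 - r)).mul_left B
  have htot : HasSum (fun ℓ : ℕ => thermalEigenvalue s ℓ *
      Real.log (thermalEigenvalue s ℓ / thermalEigenvalue (lam * s) ℓ))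
      (A * (r / (1 - r) ^ 2) * (1 - r) + B * ((1 - r) * (1 - r)⁻¹)) := by
    refine HasSum.congr_fun (hsum1.add hsum2) ?_
    intro ℓ; exact hterm ℓ
  rw [htot.tsum_eq]
  have h1rne : (1 - r) ≠ 0 := by linarith
  have hs1' : s + 1 ≠ 0 := ne_of_gt hs1
  have hrr : r / (1 - r) = (s - 1) / 2 := by
    rw [hr, show 1 - (s-1)/(s+1) = 2/(s+1) by field_simp; norm_num]
    rw [div_div_div_comm, div_self hs1', div_one]
  have hval : A * (r / (1 - r) ^ 2) * (1 - r) + B * ((1 - r) * (1 - r)⁻¹)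
      = A * ((s - 1) / 2) + B := by
    rw [mul_inv_cancel₀ h1rne, mul_one]
    congr 1
    have h2 : r / (1 - r) ^ 2 * (1 - r) = r / (1 - r) := by
      field_simp
    rw [mul_assoc, h2, hrr]
  rw [hval]
  -- final inequality
  rcases eq_or_lt_of_le hs with h1 | h1
  · subst h1
    simp only [hB]
    norm_num
  · have hsm : (0:ℝ) < s - 1 := by linarith
    have hAle : A ≤ -2 * s * (lam - 1) / ((s + 1) * (lam * s - 1)) := by
      refine (Real.log_le_sub_one_of_pos (div_pos (by positivity) (by positivity))).trans
        (le_of_eq ?_)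
      rw [div_sub_one (mul_pos hs1 hls1).ne']
      congr 1
      ring
    have hBle : B - Real.log ((lam + 1) / 2)
        ≤ (lam - 1) * (s - 1) / ((s + 1) * (lam + 1)) := by
      rw [hB, ← Real.log_div (by positivity) (by positivity)]
      refine (Real.log_le_sub_one_of_pos (by positivity)).trans (le_of_eq ?_)
      have hl1 : lam + 1 ≠ 0 := by positivity
      field_simp
      ring
    have hkey : -2 * s * (lam - 1) / ((s + 1) * (lam * s - 1)) * ((s - 1) / 2)
        + (lam - 1) * (s - 1) / ((s + 1) * (lam + 1)) ≤ 0 := by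
      rw [div_mul_div_comm, div_add_div _ _ (by positivity) (by positivity)]
      refine div_nonpos_of_nonpos_of_nonneg ?_ (by positivity)
      nlinarith [mul_pos hsm (sub_pos.mpr hlam), mul_pos hls1 hsm]
    have : A * ((s - 1) / 2) ≤ -2 * s * (lam - 1) / ((s + 1) * (lam * s - 1)) * ((s - 1) / 2) :=
      mul_le_mul_of_nonneg_right hAle (by positivity)
    linarith

/-- **relative-entropy multi-mode Gaussian de Finetti bound.**
For `d ≥ 1`, `1 ≤ k < n`, `λ = n/(n-k)` and symplectic eigenvalues `s_α ≥ 1`, the sum of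
the single-mode relative entropies is at most `d · log((n - k/2)/(n - k))`. -/
theorem multimode_relative_entropy_de_finetti (d k n : ℕ) (hd : 1 ≤ d)
    (hk : 1 ≤ k) (hkn : k < n)
    (lam : ℝ) (hlam : lam = (n : ℝ) / ((n : ℝ) - k))
    (s : Fin d → ℝ) (hs : ∀ α, 1 ≤ s α) :
    ∑ α : Fin d, ∑' ℓ : ℕ, thermalEigenvalue (s α) ℓ *
        Real.log (thermalEigenvalue (s α) ℓ / thermalEigenvalue (lam * s α) ℓ)
      ≤ (d : ℝ) * Real.log (((n : ℝ) - (k : ℝ) / 2) / ((n : ℝ) - k)) := by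
  have hnk : (0:ℝ) < (n : ℝ) - k := by
    have := (Nat.cast_lt (α := ℝ)).mpr hkn; linarith
  have hk0 : (0:ℝ) < k := by exact_mod_cast hk
  have hlam1 : 1 < lam := by
    rw [hlam, lt_div_iff₀ hnk]; linarith
  have hrhs : ((n : ℝ) - (k : ℝ) / 2) / ((n : ℝ) - k) = (lam + 1) / 2 := by
    rw [hlam]; field_simp; ring
  rw [hrhs]
  calc ∑ α : Fin d, ∑' ℓ : ℕ, thermalEigenvalue (s α) ℓ *
        Real.log (thermalEigenvalue (s α) ℓ / thermalEigenvalue (lam * s α) ℓ)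
      ≤ ∑ α : Fin d, Real.log ((lam + 1) / 2) :=
        Finset.sum_le_sum fun α _ => thermal_key lam (s α) hlam1 (hs α)
    _ = (d : ℝ) * Real.log ((lam + 1) / 2) := by
        rw [Finset.sum_const, Finset.card_univ, Fintype.card_fin, nsmul_eq_mul]
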